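/- Let K be a Hermitian matrix indexed by (Fin D_v × Fin D_h), set D = D_v·D_h, and let a, b be natural numbers. Then (1/D²)·|Tr( (Tr_v K^{a})·(Tr_v K^{b}) )| ≤ ‖K‖_∞^{a+b} / D_h, where Tr_v is the partial trace over the visible (first) factor and ‖·‖_∞ is the operator norm. -/

import Mathlib

open Matrix BigOperators

/-- The operator norm (largest singular value) of a complex square matrix, realized as the
norm of the induced operator on Euclidean space. -/
noncomputable def opNorm {n : Type*} [Fintype n] [DecidableEq n] (A : Matrix n n ℂ) : ℝ :=
  ‖Matrix.toEuclideanCLM (𝕜 := ℂ) A‖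

/-- Partial trace over the visible (first) tensor factor. -/
noncomputable def trV {Dv Dh : ℕ} (M : Matrix (Fin Dv × Fin Dh) (Fin Dv × Fin Dh) ℂ) :
    Matrix (Fin Dh) (Fin Dh) ℂ :=
  Matrix.of fun q s => ∑ p, M (p, q) (p, s)


open scoped Matrix.Norms.L2Operator

lemma opNorm_eq_norm {n : Type*} [Fintype n] [DecidableEq n] (A : Matrix n n ℂ) :
    opNorm A = ‖A‖ := rfl

lemma euclid_coord_le {n : Type*} [Fintype n] (x : EuclideanSpace ℂ n) (i : n) :
    ‖x i‖ ≤ ‖x‖ := by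
  rw [EuclideanSpace.norm_eq]
  rw [show ‖x i‖ = Real.sqrt (‖x i‖ ^ 2) from (Real.sqrt_sq (norm_nonneg _)).symm]
  apply Real.sqrt_le_sqrt
  exact Finset.single_le_sum (fun j _ => sq_nonneg ‖x j‖) (Finset.mem_univ i)

lemma norm_entry_le {n : Type*} [Fintype n] [DecidableEq n] (A : Matrix n n ℂ) (i j : n) :
    ‖A i j‖ ≤ ‖A‖ := by
  have h := A.l2_opNorm_mulVec (EuclideanSpace.single j (1 : ℂ))
  rw [EuclideanSpace.norm_single, norm_one, mul_one] at h
  refine le_trans ?_ h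
  have h2 := euclid_coord_le ((EuclideanSpace.equiv n ℂ).symm <|
      A *ᵥ (EuclideanSpace.single j (1 : ℂ))) i
  refine le_trans (le_of_eq ?_) h2
  show ‖A i j‖ = ‖(A *ᵥ (Pi.single j (1:ℂ))) i‖
  rw [Matrix.mulVec_single]
  simp

noncomputable def blk {Dv Dh : ℕ} (p : Fin Dv)
    (M : Matrix (Fin Dv × Fin Dh) (Fin Dv × Fin Dh) ℂ) : Matrix (Fin Dh) (Fin Dh) ℂ :=
  Matrix.of fun q s => M (p, q) (p, s)

lemma trV_eq_sum_blk {Dv Dh : ℕ} (M : Matrix (Fin Dv × Fin Dh) (Fin Dv × Fin Dh) ℂ) :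
    trV M = ∑ p, blk p M := by
  ext q s
  simp [trV, blk, Matrix.sum_apply]

lemma norm_blk_le {Dv Dh : ℕ} (p : Fin Dv)
    (M : Matrix (Fin Dv × Fin Dh) (Fin Dv × Fin Dh) ℂ) : ‖blk p M‖ ≤ ‖M‖ := by
  rw [Matrix.l2_opNorm_def]
  apply ContinuousLinearMap.opNorm_le_bound _ (norm_nonneg M)
  intro x
  set xt : EuclideanSpace ℂ (Fin Dv × Fin Dh) :=
    (WithLp.equiv 2 _).symm (fun pq : Fin Dv × Fin Dh => if pq.1 = p then x pq.2 else 0) with hxt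
  have hxtnorm : ‖xt‖ = ‖x‖ := by
    rw [EuclideanSpace.norm_eq, EuclideanSpace.norm_eq]
    congr 1
    rw [Fintype.sum_prod_type]
    rw [Finset.sum_comm]
    apply Finset.sum_congr rfl
    intro q _
    simp [hxt, apply_ite]
  have happ : ∀ q, (Matrix.toEuclideanLin (blk p M) x) q = (M *ᵥ (WithLp.equiv 2 _) xt) (p, q) := by
    intro q
    simp only [Matrix.toEuclideanLin_apply, hxt, Equiv.apply_symm_apply]
    rw [Matrix.mulVec, Matrix.mulVec]
    show ∑ s, blk p M q s * (WithLp.equiv 2 _) x s = _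
    simp [dotProduct, Fintype.sum_prod_type, blk, mul_ite, mul_zero, Finset.sum_ite_eq, Finset.sum_ite_eq']
  have h1 := M.l2_opNorm_mulVec xt
  rw [hxtnorm] at h1
  refine le_trans ?_ h1
  show ‖Matrix.toEuclideanLin (blk p M) x‖ ≤ _
  rw [EuclideanSpace.norm_eq, EuclideanSpace.norm_eq]
  apply Real.sqrt_le_sqrt
  calc ∑ q, ‖(Matrix.toEuclideanLin (blk p M) x) q‖ ^ 2
      = ∑ q, ‖(M *ᵥ (WithLp.equiv 2 _) xt) (p, q)‖ ^ 2 :=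
        Finset.sum_congr rfl fun q _ => by rw [happ]
    _ ≤ ∑ pq : Fin Dv × Fin Dh, ‖(M *ᵥ (WithLp.equiv 2 _) xt) pq‖ ^ 2 := by
        rw [Fintype.sum_prod_type]
        exact Finset.single_le_sum
          (f := fun p' => ∑ q, ‖(M *ᵥ (WithLp.equiv 2 _) xt) (p', q)‖ ^ 2)
          (fun p' _ => Finset.sum_nonneg fun q _ => sq_nonneg _) (Finset.mem_univ p)
    _ = ∑ pq : Fin Dv × Fin Dh,
        ‖((EuclideanSpace.equiv (Fin Dv × Fin Dh) ℂ).symm <| M *ᵥ xt) pq‖ ^ 2 := rfl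


lemma norm_pow_le_l2 {n : Type*} [Fintype n] [DecidableEq n] (A : Matrix n n ℂ) (k : ℕ) :
    ‖A ^ k‖ ≤ ‖A‖ ^ k := by
  induction k with
  | zero =>
    simp only [pow_zero]
    rw [Matrix.cstar_norm_def, _root_.map_one]
    exact ContinuousLinearMap.norm_id_le
  | succ k ih =>
    rw [pow_succ, pow_succ]
    exact (Matrix.l2_opNorm_mul _ _).trans
      (mul_le_mul_of_nonneg_right ih (norm_nonneg _))


/-- the error bound (prodbd) of Appendix A: for a Hermitian `K` on
`ℂ^{Dv} ⊗ ℂ^{Dh}` with `D = Dv Dh`,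
`(1/D²) |Tr((Tr_v K^a)(Tr_v K^b))| ≤ ‖K‖_∞^{a+b} / Dh`. -/
theorem trV_power_product_bound (Dv Dh : ℕ)
    (K : Matrix (Fin Dv × Fin Dh) (Fin Dv × Fin Dh) ℂ) (hK : K.IsHermitian) (a b : ℕ) :
    (((Dv : ℝ) * (Dh : ℝ)) ^ 2)⁻¹ *
        ‖((trV (K ^ a)) * (trV (K ^ b))).trace‖ ≤
      opNorm K ^ (a + b) / Dh := by
  have hKnn : (0:ℝ) ≤ opNorm K := norm_nonneg _
  have hY : (0:ℝ) ≤ opNorm K ^ (a + b) := pow_nonneg hKnn _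
  have term_bound : ∀ p p' : Fin Dv,
      ‖(blk p (K ^ a) * blk p' (K ^ b)).trace‖ ≤ (Dh : ℝ) * opNorm K ^ (a + b) := by
    intro p p'
    have hblk : ‖blk p (K ^ a)‖ * ‖blk p' (K ^ b)‖ ≤ opNorm K ^ (a + b) := by
      rw [pow_add]
      exact mul_le_mul ((norm_blk_le _ _).trans (norm_pow_le_l2 _ _))
        ((norm_blk_le _ _).trans (norm_pow_le_l2 _ _)) (norm_nonneg _)
        (pow_nonneg hKnn _)
    calc ‖(blk p (K ^ a) * blk p' (K ^ b)).trace‖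
        ≤ ∑ q, ‖(blk p (K ^ a) * blk p' (K ^ b)) q q‖ := by
          rw [Matrix.trace]; exact norm_sum_le _ _
      _ ≤ ∑ _q : Fin Dh, ‖blk p (K ^ a)‖ * ‖blk p' (K ^ b)‖ :=
          Finset.sum_le_sum fun q _ =>
            (norm_entry_le _ q q).trans (Matrix.l2_opNorm_mul _ _)
      _ = (Dh : ℝ) * (‖blk p (K ^ a)‖ * ‖blk p' (K ^ b)‖) := by
          simp [Finset.sum_const, mul_comm]
      _ ≤ (Dh : ℝ) * opNorm K ^ (a + b) :=
          mul_le_mul_of_nonneg_left hblk (Nat.cast_nonneg _)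
  have key : ‖(trV (K ^ a) * trV (K ^ b)).trace‖
      ≤ (Dv : ℝ) ^ 2 * Dh * opNorm K ^ (a + b) := by
    rw [trV_eq_sum_blk, trV_eq_sum_blk, Finset.sum_mul_sum]
    rw [Matrix.trace_sum]
    simp only [Matrix.trace_sum]
    calc ‖∑ p : Fin Dv, ∑ p' : Fin Dv, (blk p (K ^ a) * blk p' (K ^ b)).trace‖
        ≤ ∑ p : Fin Dv, ∑ p' : Fin Dv, ‖(blk p (K ^ a) * blk p' (K ^ b)).trace‖ :=
          (norm_sum_le _ _).trans (Finset.sum_le_sum fun p _ => norm_sum_le _ _)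
      _ ≤ ∑ _p : Fin Dv, ∑ _p' : Fin Dv, (Dh : ℝ) * opNorm K ^ (a + b) :=
          Finset.sum_le_sum fun p _ => Finset.sum_le_sum fun p' _ => term_bound p p'
      _ = (Dv : ℝ) ^ 2 * Dh * opNorm K ^ (a + b) := by
          simp [Finset.sum_const]; ring
  by_cases h0 : (Dv : ℝ) * (Dh : ℝ) = 0
  · rw [h0]
    rw [zero_pow (two_ne_zero), _root_.inv_zero, zero_mul]
    exact div_nonneg hY (Nat.cast_nonneg _)
  · have hv : (0:ℝ) < Dv := lt_of_le_of_ne (Nat.cast_nonneg _) (Ne.symm (left_ne_zero_of_mul h0))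
    have hh : (0:ℝ) < Dh := lt_of_le_of_ne (Nat.cast_nonneg _) (Ne.symm (right_ne_zero_of_mul h0))
    have heq : (((Dv : ℝ) * (Dh : ℝ)) ^ 2)⁻¹ * ((Dv : ℝ) ^ 2 * Dh * opNorm K ^ (a + b))
        = opNorm K ^ (a + b) / Dh := by
      field_simp
    calc (((Dv : ℝ) * (Dh : ℝ)) ^ 2)⁻¹ * ‖(trV (K ^ a) * trV (K ^ b)).trace‖
        ≤ (((Dv : ℝ) * (Dh : ℝ)) ^ 2)⁻¹ * ((Dv : ℝ) ^ 2 * Dh * opNorm K ^ (a + b)) :=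
          mul_le_mul_of_nonneg_left key (by positivity)
      _ = opNorm K ^ (a + b) / Dh := heq
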